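/- Let ℓ be a dyadic fraction and Q a dyadic square with ℓ(Q) = 2ℓ. For any two points z₁, z₂ ∈ 4Q with |z₁ − z₂| < ℓ, there is a dyadic square Q' of side length ℓ such that 7Q' ⊂ 7Q and z₁, z₂ ∈ 3Q'. -/

import Mathlib

open Complex

/-- The concentric dilate `λQ` of the dyadic square
`Q = [k 2^j, (k+1) 2^j) × [l 2^j, (l+1) 2^j)` by a factor `lam`. -/
def dyadicDilate (j k l : ℤ) (lam : ℝ) : Set ℂ :=
  {z : ℂ | |z.re - (k + 1 / 2) * (2 : ℝ) ^ j| ≤ lam * (2 : ℝ) ^ j / 2 ∧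
           |z.im - (l + 1 / 2) * (2 : ℝ) ^ j| ≤ lam * (2 : ℝ) ^ j / 2}

/-- One-dimensional version of the dyadic square fact. -/
lemma dyadic_interval_fact (t : ℝ) (ht : 0 < t) (k : ℤ) (x₁ x₂ : ℝ)
    (h₁ : |x₁ - (k + 1 / 2) * (2 * t)| ≤ 4 * (2 * t) / 2)
    (h₂ : |x₂ - (k + 1 / 2) * (2 * t)| ≤ 4 * (2 * t) / 2)
    (hd : |x₁ - x₂| < t) :
    ∃ k' : ℤ, (2 * (k : ℝ) - 3 ≤ k' ∧ (k' : ℝ) ≤ 2 * k + 4) ∧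
      |x₁ - (k' + 1 / 2) * t| ≤ 3 * t / 2 ∧ |x₂ - (k' + 1 / 2) * t| ≤ 3 * t / 2 := by
  obtain ⟨h₁l, h₁u⟩ := abs_le.mp h₁
  obtain ⟨h₂l, h₂u⟩ := abs_le.mp h₂
  obtain ⟨hdl, hdu⟩ := abs_le.mp hd.le
  -- m = min of the two points
  obtain ⟨m, hm1, hm2, hmeq⟩ : ∃ m : ℝ, m ≤ x₁ ∧ m ≤ x₂ ∧ (m = x₁ ∨ m = x₂) := by
    rcases le_total x₁ x₂ with h | h
    · exact ⟨x₁, le_refl _, h, Or.inl rfl⟩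
    · exact ⟨x₂, h, le_refl _, Or.inr rfl⟩
  clear h₁ h₂ hd
  obtain ⟨a, hat, hat'⟩ : ∃ a : ℤ, (a : ℝ) * t ≤ m ∧ m < ((a : ℝ) + 1) * t := by
    refine ⟨⌊m / t⌋, ?_, ?_⟩
    · rw [← le_div_iff₀ ht]; exact Int.floor_le _
    · rw [← div_lt_iff₀ ht]; exact Int.lt_floor_add_one _
  have hma : (2 * (k : ℝ) - 3) * t ≤ m := by
    rcases hmeq with h | h <;> rw [h] <;> linarith
  have halowZ : 2 * k - 3 ≤ a := by
    have h1 : (2 * (k : ℝ) - 3) * t < ((a : ℝ) + 1) * t := lt_of_le_of_lt hma hat'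
    have h2 : (2 * (k : ℝ) - 3) < (a : ℝ) + 1 := lt_of_mul_lt_mul_right h1 ht.le
    have h3 : ((2 * k - 3 : ℤ) : ℝ) < ((a + 1 : ℤ) : ℝ) := by push_cast; linarith
    have h4 : (2 * k - 3 : ℤ) < a + 1 := by exact_mod_cast h3
    omega
  have halow : 2 * (k : ℝ) - 3 ≤ (a : ℝ) := by
    have : ((2 * k - 3 : ℤ) : ℝ) ≤ (a : ℝ) := by exact_mod_cast halowZ
    push_cast at this; linarith
  obtain ⟨k', hk'a, hk'b, hk'eq⟩ :
      ∃ k' : ℤ, (k' : ℝ) ≤ a ∧ (k' : ℝ) ≤ 2 * (k : ℝ) + 4 ∧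
        (k' = a ∨ (k' : ℝ) = 2 * (k : ℝ) + 4) := by
    rcases le_total a (2 * k + 4) with h | h
    · have h' : (a : ℝ) ≤ ((2 * k + 4 : ℤ) : ℝ) := by exact_mod_cast h
      push_cast at h'
      exact ⟨a, le_refl _, by linarith, Or.inl rfl⟩
    · have h' : ((2 * k + 4 : ℤ) : ℝ) ≤ (a : ℝ) := by exact_mod_cast h
      push_cast at h' ⊢
      exact ⟨2 * k + 4, by push_cast; linarith, by push_cast; linarith,
        Or.inr (by push_cast; ring)⟩
  have hlow : (k' : ℝ) * t ≤ m := by nlinarith [mul_nonneg (sub_nonneg.mpr hk'a) ht.le]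
  have hxm₁ : x₁ ≤ m + t := by rcases hmeq with h | h <;> rw [h] <;> linarith
  have hxm₂ : x₂ ≤ m + t := by rcases hmeq with h | h <;> rw [h] <;> linarith
  have hup₁ : x₁ ≤ ((k' : ℝ) + 2) * t := by
    rcases hk'eq with h | h
    · rw [h]; have h' : (a : ℝ) ≤ (k' : ℝ) := by exact_mod_cast h.ge
      rw [h] at h'; linarith
    · rw [h]; linarith
  have hup₂ : x₂ ≤ ((k' : ℝ) + 2) * t := by
    rcases hk'eq with h | h
    · rw [h]; linarith
    · rw [h]; linarith
  have hk'low : 2 * (k : ℝ) - 3 ≤ (k' : ℝ) := by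
    rcases hk'eq with h | h
    · subst h; exact halow
    · rw [h]; linarith
  refine ⟨k', ⟨hk'low, hk'b⟩, ?_, ?_⟩ <;> rw [abs_le] <;> constructor <;>
    linarith [hlow, hup₁, hup₂, hm1, hm2]

theorem dyadic_square_fact (j k l : ℤ) (z₁ z₂ : ℂ)
    (h₁ : z₁ ∈ dyadicDilate (j + 1) k l 4) (h₂ : z₂ ∈ dyadicDilate (j + 1) k l 4)
    (hdist : dist z₁ z₂ < (2 : ℝ) ^ j) :
    ∃ k' l' : ℤ, dyadicDilate j k' l' 7 ⊆ dyadicDilate (j + 1) k l 7 ∧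
      z₁ ∈ dyadicDilate j k' l' 3 ∧ z₂ ∈ dyadicDilate j k' l' 3 := by
  have ht : (0 : ℝ) < (2 : ℝ) ^ j := by positivity
  set t : ℝ := (2 : ℝ) ^ j with htdef
  have hpow : (2 : ℝ) ^ (j + 1) = 2 * t := by
    rw [htdef, zpow_add_one₀ (by norm_num : (2:ℝ) ≠ 0)]; ring
  obtain ⟨h₁r, h₁i⟩ := h₁
  obtain ⟨h₂r, h₂i⟩ := h₂
  rw [hpow] at h₁r h₁i h₂r h₂i
  have hre : |z₁.re - z₂.re| < t := by
    calc |z₁.re - z₂.re| = |(z₁ - z₂).re| := by rw [Complex.sub_re]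
      _ ≤ ‖z₁ - z₂‖ := Complex.abs_re_le_norm _
      _ = dist z₁ z₂ := (Complex.dist_eq _ _).symm
      _ < t := hdist
  have him : |z₁.im - z₂.im| < t := by
    calc |z₁.im - z₂.im| = |(z₁ - z₂).im| := by rw [Complex.sub_im]
      _ ≤ ‖z₁ - z₂‖ := Complex.abs_im_le_norm _
      _ = dist z₁ z₂ := (Complex.dist_eq _ _).symm
      _ < t := hdist
  obtain ⟨k', ⟨hk'l, hk'u⟩, hk1, hk2⟩ := dyadic_interval_fact t ht k z₁.re z₂.re h₁r h₂r hre
  obtain ⟨l', ⟨hl'l, hl'u⟩, hl1, hl2⟩ := dyadic_interval_fact t ht l z₁.im z₂.im h₁i h₂i him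
  refine ⟨k', l', ?_, ⟨hk1, hl1⟩, ⟨hk2, hl2⟩⟩
  intro z ⟨hzr, hzi⟩
  obtain ⟨hzrl, hzru⟩ := abs_le.mp hzr
  obtain ⟨hzil, hziu⟩ := abs_le.mp hzi
  constructor <;> rw [hpow, abs_le] <;> constructor <;>
    linarith [mul_nonneg (sub_nonneg.mpr hk'l) ht.le, mul_nonneg (sub_nonneg.mpr hk'u) ht.le,
      mul_nonneg (sub_nonneg.mpr hl'l) ht.le, mul_nonneg (sub_nonneg.mpr hl'u) ht.le]
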